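/- Let X be an M-step shift of finite type over a finitely generated free group or monoid G. Then every asymptotic G-pseudo-orbit that is also a 2^{−M−1}-G-pseudo-orbit is asymptotically shadowed by some point of X. -/

import Mathlib

/-- Reduced words over the alphabet `S` of generators and inverses (`ι` = formal inverse). -/
def Reduced {S : Type*} (ι : S → S) (l : List S) : Prop :=
  l.Chain' (fun a b => b ≠ ι a)

/-- Left multiplication of a reduced word by a letter, with cancellation. -/
def consRed {S : Type*} [DecidableEq S] (ι : S → S) (i : S) : List S → List S
  | [] => [i]
  | a :: t => if a = ι i then t else i :: a :: t

theorem reduced_consRed {S : Type*} [DecidableEq S] (ι : S → S) (i : S) {l : List S}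
    (h : Reduced ι l) : Reduced ι (consRed ι i l) := by
  cases l with
  | nil => exact List.isChain_singleton i
  | cons a t =>
    have h' : List.Chain' (fun a b => b ≠ ι a) (a :: t) := h
    by_cases hc : a = ι i
    · simpa [consRed, hc, Reduced, List.Chain'] using h'.tail
    · simp only [consRed, if_neg hc]
      exact List.isChain_cons_cons.mpr ⟨hc, h'⟩

/-- Multiplication of reduced words: multiply the letters of `v` onto `u` from the right. -/
def mulRed {S : Type*} [DecidableEq S] (ι : S → S) (v u : List S) : List S :=
  v.foldr (consRed ι) u

theorem reduced_mulRed {S : Type*} [DecidableEq S] (ι : S → S) (v : List S) {u : List S}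
    (h : Reduced ι u) : Reduced ι (mulRed ι v u) := by
  induction v with
  | nil => exact h
  | cons a t ih => exact reduced_consRed ι a ih

/-- The reduced words of the free group with inverse map `ι` on the alphabet `S`. -/
abbrev Word {S : Type*} (ι : S → S) := {l : List S // Reduced ι l}

/-- The length of a reduced word. -/
def wlen {S : Type*} {ι : S → S} (u : Word ι) : ℕ := u.1.length

/-- The empty word (identity element). -/
def emptyWord {S : Type*} (ι : S → S) : Word ι := ⟨[], List.isChain_nil⟩

/-- A single-letter word. -/
def word1 {S : Type*} (ι : S → S) (i : S) : Word ι := ⟨[i], List.isChain_singleton i⟩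

/-- The group product `v · u` as a reduced word. -/
def wmul {S : Type*} [DecidableEq S] {ι : S → S} (v : List S) (u : Word ι) : Word ι :=
  ⟨mulRed ι v u.1, reduced_mulRed ι v u.2⟩

/-- The product of two reduced words. -/
def wordMul {S : Type*} [DecidableEq S] {ι : S → S} (u v : Word ι) : Word ι :=
  wmul u.1 v

/-- The shift `σ_v`: `σ_v(x)(u) = x(vu)`. -/
def shiftBy {S A : Type*} [DecidableEq S] {ι : S → S} (v : List S) (x : Word ι → A) :
    Word ι → A :=
  fun u => x (wmul v u)

/-- The metric on `𝒜^G`: `d(x,y) = inf({2^{-n} : x, y agree on all words of length < n})`. -/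
noncomputable def shiftDist {S A : Type*} {ι : S → S} (x y : Word ι → A) : ℝ :=
  sInf {r | ∃ n : ℕ, (∀ u : Word ι, wlen u < n → x u = y u) ∧ r = (2 : ℝ) ^ (-(n : ℤ))}

/-- `B` (viewed as an `m`-block, i.e. only through its values on words of length `< m`)
occurs in `x`. -/
def occursIn {S A : Type*} [DecidableEq S] {ι : S → S} (x : Word ι → A) (m : ℕ)
    (B : Word ι → A) : Prop :=
  ∃ u : Word ι, ∀ v : Word ι, wlen v < m → shiftBy u.1 x v = B v

/-- The shift space determined by a set `𝓕` of forbidden blocks (an element `(m, B)`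
represents the `m`-block obtained by restricting `B` to words of length `< m`). -/
def shiftOf {S A : Type*} [DecidableEq S] (ι : S → S) (𝓕 : Set (ℕ × (Word ι → A))) :
    Set (Word ι → A) :=
  {x | ∀ p ∈ 𝓕, ¬ occursIn x p.1 p.2}

/-- A shift space: a subset of the full shift cut out by a set of forbidden blocks. -/
def IsShiftSpace {S A : Type*} [DecidableEq S] (ι : S → S) (X : Set (Word ι → A)) : Prop :=
  ∃ 𝓕 : Set (ℕ × (Word ι → A)), X = shiftOf ι 𝓕

/-- A shift of finite type: cut out by finitely many forbidden blocks. -/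
def IsSFT {S A : Type*} [DecidableEq S] (ι : S → S) (X : Set (Word ι → A)) : Prop :=
  ∃ 𝓕 : Set (ℕ × (Word ι → A)), 𝓕.Finite ∧ X = shiftOf ι 𝓕

/-- An `M`-step shift of finite type: cut out by a set of forbidden `M`-blocks. -/
def IsMStepSFT {S A : Type*} [DecidableEq S] (ι : S → S) (M : ℕ)
    (X : Set (Word ι → A)) : Prop :=
  ∃ 𝓕 : Set (ℕ × (Word ι → A)), (∀ p ∈ 𝓕, p.1 = M) ∧ X = shiftOf ι 𝓕

section AuxLemmas

variable {S : Type*} [DecidableEq S] {ι : S → S}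

lemma consRed_eq_cons {i : S} {l : List S} (h : Reduced ι (i :: l)) :
    consRed ι i l = i :: l := by
  cases l with
  | nil => rfl
  | cons a t =>
    have ha : a ≠ ι i := (List.isChain_cons_cons.mp h).1
    simp [consRed, ha]

lemma consRed_cancel (hι : ∀ s, ι (ι s) = s) (i : S) {l : List S} (h : Reduced ι l) :
    consRed ι (ι i) (consRed ι i l) = l := by
  cases l with
  | nil => simp [consRed, hι]
  | cons a t =>
    by_cases hc : a = ι i
    · subst hc
      simp only [consRed, if_pos rfl]
      cases t with
      | nil => rfl
      | cons b t' =>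
        have hb : b ≠ ι (ι i) := (List.isChain_cons_cons.mp h).1
        simp [consRed, hb]
    · simp [consRed, hc, hι]

lemma mulRed_consRed (hι : ∀ s, ι (ι s) = s) (i : S) (v : List S) {u : List S}
    (hu : Reduced ι u) :
    mulRed ι (consRed ι i v) u = consRed ι i (mulRed ι v u) := by
  cases v with
  | nil => rfl
  | cons a t =>
    by_cases hc : a = ι i
    · subst hc
      simp only [consRed, if_pos rfl]
      show mulRed ι t u = consRed ι i (consRed ι (ι i) (mulRed ι t u))
      have h2 := consRed_cancel hι (ι i) (reduced_mulRed ι t hu)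
      rw [hι] at h2
      exact h2.symm
    · simp only [consRed, if_neg hc]
      rfl

lemma mulRed_assoc (hι : ∀ s, ι (ι s) = s) (a b : List S) {c : List S}
    (hc : Reduced ι c) :
    mulRed ι (mulRed ι a b) c = mulRed ι a (mulRed ι b c) := by
  induction a with
  | nil => rfl
  | cons i t ih =>
    show mulRed ι (consRed ι i (mulRed ι t b)) c = consRed ι i (mulRed ι t (mulRed ι b c))
    rw [mulRed_consRed hι i _ hc, ih]

lemma mulRed_nil : ∀ {u : List S}, Reduced ι u → mulRed ι u [] = u := by
  intro u
  induction u with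
  | nil => intro _; rfl
  | cons a t ih =>
    intro hu
    show consRed ι a (mulRed ι t []) = a :: t
    rw [ih (List.IsChain.tail hu)]
    exact consRed_eq_cons hu

lemma mulRed_single (hι : ∀ s, ι (ι s) = s) (i : S) : ∀ {u : List S}, Reduced ι u →
    mulRed ι u [i] = u ++ [i] ∨ ∃ u', u = u' ++ [ι i] ∧ mulRed ι u [i] = u' := by
  intro u
  induction u with
  | nil => intro _; left; rfl
  | cons a t ih =>
    intro hu
    have step : mulRed ι (a :: t) [i] = consRed ι a (mulRed ι t [i]) := rfl
    rcases ih (List.IsChain.tail hu) with h | ⟨t', ht, h⟩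
    · rw [step, h]
      cases t with
      | nil =>
        by_cases hc : i = ι a
        · right
          refine ⟨[], ?_, ?_⟩
          · have : a = ι i := by rw [hc, hι]
            simp [this]
          · simp [consRed, hc]
        · left; simp [consRed, hc]
      | cons b t2 =>
        left
        have hb : b ≠ ι a := (List.isChain_cons_cons.mp hu).1
        simp [consRed, hb]
    · rw [step, h]
      subst ht
      cases t' with
      | nil => exact Or.inr ⟨[a], rfl, rfl⟩
      | cons b t2 =>
        have hb : b ≠ ι a := (List.isChain_cons_cons.mp hu).1
        right
        refine ⟨a :: b :: t2, rfl, ?_⟩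
        simp [consRed, hb]

lemma length_le_mulRed_single (hι : ∀ s, ι (ι s) = s) (i : S) {u : List S}
    (hu : Reduced ι u) :
    u.length ≤ (mulRed ι u [i]).length + 1 := by
  rcases mulRed_single hι i hu with h | ⟨u', h1, h2⟩
  · rw [h]
    simp only [List.length_append, List.length_cons, List.length_nil]
    omega
  · rw [h2, h1]; simp

lemma agree_of_shiftDist_lt {A : Type*} {x y : Word ι → A} {k : ℕ}
    (h : shiftDist x y < (2 : ℝ) ^ (-(k : ℤ))) {u : Word ι} (hu : wlen u < k + 1) :
    x u = y u := by
  have hne : {r | ∃ n : ℕ, (∀ u : Word ι, wlen u < n → x u = y u) ∧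
      r = (2 : ℝ) ^ (-(n : ℤ))}.Nonempty := ⟨1, 0, by simp, by simp⟩
  obtain ⟨r, ⟨n, hagree, rfl⟩, hr⟩ := exists_lt_of_csInf_lt hne h
  have hkn : k < n := by
    by_contra hkn
    push_neg at hkn
    have hmono : (2 : ℝ) ^ (-(k : ℤ)) ≤ (2 : ℝ) ^ (-(n : ℤ)) := by
      apply zpow_le_zpow_right₀ (by norm_num : (1:ℝ) ≤ 2)
      omega
    linarith
  exact hagree u (by omega)

lemma shiftDist_le_of_agree {A : Type*} {x y : Word ι → A} {k : ℕ}
    (h : ∀ u : Word ι, wlen u < k → x u = y u) :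
    shiftDist x y ≤ (2 : ℝ) ^ (-(k : ℤ)) := by
  apply csInf_le
  · refine ⟨0, ?_⟩
    rintro r ⟨n, -, rfl⟩
    positivity
  · exact ⟨k, h, rfl⟩

lemma key_lemma {A : Type*} (hι : ∀ s, ι (ι s) = s)
    (𝒪 : Word ι → Word ι → A) (m : ℕ) (P : Word ι → ℕ → Prop)
    (hP : ∀ (u : Word ι) (i : S) (k : ℕ), P u (k + 1) → P (wmul u.1 (word1 ι i)) k)
    (hstep : ∀ (u : Word ι) (i : S) (w : Word ι), wlen w < m → P u (wlen w + 1) →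
      𝒪 u (wmul [i] w) = 𝒪 (wmul u.1 (word1 ι i)) w) :
    ∀ (l : List S) (hl : Reduced ι l), l.length < m → ∀ u : Word ι, P u l.length →
      𝒪 u ⟨l, hl⟩ = 𝒪 (wmul u.1 ⟨l, hl⟩) (emptyWord ι) := by
  intro l
  induction l with
  | nil =>
    intro hl _ u _
    have h0 : wmul u.1 ⟨[], hl⟩ = u := Subtype.ext (mulRed_nil u.2)
    rw [h0]
    rfl
  | cons i w ih =>
    intro hl hlen u hu
    have hw : Reduced ι w := List.IsChain.tail hl
    have h1 : wmul [i] ⟨w, hw⟩ = ⟨i :: w, hl⟩ := Subtype.ext (consRed_eq_cons hl)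
    have hwlen : w.length < m := by
      have : (i :: w).length = w.length + 1 := rfl
      omega
    have h2 := hstep u i ⟨w, hw⟩ hwlen hu
    rw [h1] at h2
    have h3 := ih hw (by omega) (wmul u.1 (word1 ι i)) (hP u i _ hu)
    rw [h2, h3]
    congr 1
    apply Subtype.ext
    show mulRed ι (mulRed ι u.1 [i]) w = mulRed ι u.1 (i :: w)
    rw [mulRed_assoc hι u.1 [i] hw]
    congr 1
    exact consRed_eq_cons hl

end AuxLemmas

/-- in an `M`-step shift of finite type, every asymptotic pseudo-orbit
which is also a `2^{-M-1}`-pseudo-orbit is asymptotically shadowed by a point of `X`. -/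
theorem asymptotic_shadowing_in_MStepSFT {S A : Type*} [DecidableEq S]
    [Fintype S] [Fintype A]
    (ι : S → S) (hι : ∀ s, ι (ι s) = s) (hιne : ∀ s, ι s ≠ s)
    (M : ℕ) (X : Set (Word ι → A)) (hX : IsMStepSFT ι M X)
    (𝒪 : Word ι → (Word ι → A)) (h𝒪 : ∀ u, 𝒪 u ∈ X)
    (hpo : ∀ (u : Word ι) (i : S),
      shiftDist (shiftBy [i] (𝒪 u)) (𝒪 (wordMul u (word1 ι i))) < (2 : ℝ) ^ (-(M + 1 : ℤ)))
    (hasym : ∀ δ > (0 : ℝ), ∃ n : ℕ, ∀ u : Word ι, n < wlen u → ∀ i : S,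
      shiftDist (shiftBy [i] (𝒪 u)) (𝒪 (wordMul u (word1 ι i))) < δ) :
    ∃ x ∈ X, ∀ ε > (0 : ℝ), ∃ n : ℕ, ∀ u : Word ι, n < wlen u →
      shiftDist (shiftBy u.1 x) (𝒪 u) < ε := by
  obtain ⟨𝓕, h𝓕M, hXeq⟩ := hX
  set x : Word ι → A := fun u => 𝒪 u (emptyWord ι) with hx
  have hstep_all : ∀ (u : Word ι) (i : S) (w : Word ι), wlen w < M + 2 →
      𝒪 u (wmul [i] w) = 𝒪 (wmul u.1 (word1 ι i)) w := by
    intro u i w hw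
    have hd : shiftDist (shiftBy [i] (𝒪 u)) (𝒪 (wordMul u (word1 ι i)))
        < (2 : ℝ) ^ (-((M + 1 : ℕ) : ℤ)) := by
      have h := hpo u i
      push_cast
      exact h
    exact agree_of_shiftDist_lt hd (by omega)
  have claim1 := key_lemma hι 𝒪 (M + 2) (fun _ _ => True)
    (fun _ _ _ _ => trivial) (fun u i w hw _ => hstep_all u i w hw)
  have xmem : x ∈ X := by
    rw [hXeq]
    rintro p hp ⟨u, hocc⟩
    have hmem := h𝒪 u
    rw [hXeq] at hmem
    refine hmem p hp ⟨emptyWord ι, ?_⟩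
    intro v hv
    have hv' : wlen v < M + 2 := by
      have hpM := h𝓕M p hp
      omega
    have e1 : shiftBy (emptyWord ι).1 (𝒪 u) v = 𝒪 u v := rfl
    rw [e1, ← hocc v hv]
    exact claim1 v.1 v.2 hv' u trivial
  refine ⟨x, xmem, ?_⟩
  intro ε hε
  obtain ⟨m, hm⟩ := exists_pow_lt_of_lt_one hε (by norm_num : (1 : ℝ) / 2 < 1)
  have hm' : (2 : ℝ) ^ (-(m : ℤ)) < ε := by
    have e : (2 : ℝ) ^ (-(m : ℤ)) = (1 / 2 : ℝ) ^ m := by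
      rw [zpow_neg, zpow_natCast, one_div, inv_pow]
    rw [e]; exact hm
  obtain ⟨n₀, hn₀⟩ := hasym ((2 : ℝ) ^ (-(m : ℤ))) (by positivity)
  have claim2 := key_lemma hι 𝒪 m (fun u k => n₀ + k < wlen u)
    (fun u i k hk => by
      have h1 := length_le_mulRed_single hι i u.2
      have hk' : n₀ + (k + 1) < u.1.length := hk
      show n₀ + k < (mulRed ι u.1 [i]).length
      omega)
    (fun u i w hw hk => by
      have hu : n₀ < wlen u := by
        have hk' : n₀ + (wlen w + 1) < wlen u := hk
        omega
      exact agree_of_shiftDist_lt (hn₀ u hu i) (by omega))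
  refine ⟨n₀ + m, ?_⟩
  intro u hu
  have hagree : ∀ v : Word ι, wlen v < m → shiftBy u.1 x v = 𝒪 u v := by
    intro v hv
    have h := claim2 v.1 v.2 hv u (by show n₀ + v.1.length < wlen u; have : v.1.length = wlen v := rfl; omega)
    exact h.symm
  calc shiftDist (shiftBy u.1 x) (𝒪 u) ≤ (2 : ℝ) ^ (-(m : ℤ)) :=
        shiftDist_le_of_agree hagree
    _ < ε := hm'
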